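/- arXiv:1204.4138 — 2 statements merged into one kernel-verified Lean document; each statement's English description precedes it below -/
import Mathlib

section
/- Let W : ℝ^n → ℝ be C², convex, with ∇²W(x) ≥ K·Id (as quadratic forms) for all |x| ≥ R, where K > 0. Then for all x, y ∈ ℝ^n with |x| ≥ 2R or |y| ≥ 2R, one has (∇W(x) - ∇W(y)) · (x - y) ≥ (K/3) |x - y|². -/
open RealInnerProductSpace

-- interval selection lemma
lemma select_interval {E : Type*} [NormedAddCommGroup E] [NormedSpace ℝ E]
    (R : ℝ) (hR : 0 ≤ R) (x y : E) (hx : 2 * R ≤ ‖x‖) (hv : x ≠ y) :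
    ∃ a b : ℝ, 0 ≤ a ∧ a ≤ b ∧ b ≤ 1 ∧ b - a ≤ 2/3 ∧
      (∀ t ∈ Set.Ioo (0:ℝ) a, R ≤ ‖y + t • (x - y)‖) ∧
      (∀ t ∈ Set.Ioo b (1:ℝ), R ≤ ‖y + t • (x - y)‖) := by
  set v := x - y with hvdef
  set L := ‖v‖ with hL
  have hL0 : 0 < L := by
    simpa [hL, hvdef, sub_eq_zero] using hv
  have hzx : ∀ t : ℝ, t ≤ 1 → ‖x‖ - (1 - t) * L ≤ ‖y + t • v‖ := by
    intro t ht1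
    have h1 : x - (y + t • v) = (1 - t) • v := by
      rw [hvdef]; module
    have h2 : ‖x - (y + t • v)‖ = |1 - t| * L := by
      rw [h1, norm_smul, Real.norm_eq_abs, hL]
    have h3 := norm_sub_norm_le x (y + t • v)
    rw [h2, abs_of_nonneg (by linarith : (0:ℝ) ≤ 1 - t)] at h3
    linarith
  by_cases hcase : L ≤ 3 * (‖x‖ - R)
  · refine ⟨0, max 0 (1 - (‖x‖ - R)/L), le_refl 0, le_max_left _ _, ?_, ?_, ?_, ?_⟩
    · have h0 : 0 ≤ (‖x‖ - R)/L := div_nonneg (by nlinarith) hL0.le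
      exact max_le (by norm_num) (by linarith)
    · have h13 : (1:ℝ)/3 ≤ (‖x‖ - R)/L := by
        rw [div_le_div_iff₀ (by norm_num) hL0]
        linarith
      rw [sub_zero]
      exact max_le (by norm_num) (by linarith)
    · intro t ht; exact absurd (ht.1.trans ht.2) (lt_irrefl 0)
    · intro t ht
      have hb : 1 - (‖x‖ - R)/L < t := lt_of_le_of_lt (le_max_right _ _) ht.1
      have : (1 - t) * L < ‖x‖ - R := by
        rw [← lt_div_iff₀ hL0]; linarith
      linarith [hzx t ht.2.le]
  · push_neg at hcase
    have hRL : 3 * R ≤ L := by nlinarith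
    set B : Set ℝ := {t | t ∈ Set.Icc (0:ℝ) 1 ∧ ‖y + t • v‖ < R} with hB
    by_cases hne : B.Nonempty
    · have hBdd : BddAbove B := ⟨1, fun t ht => ht.1.2⟩
      have hBddb : BddBelow B := ⟨0, fun t ht => ht.1.1⟩
      set a := sInf B with ha
      set b := sSup B with hb
      have ha0 : 0 ≤ a := le_csInf hne fun t ht => ht.1.1
      have hb1 : b ≤ 1 := csSup_le hne fun t ht => ht.1.2
      have hab : a ≤ b := csInf_le_csSup hne hBddb hBdd
      have hdist : ∀ s ∈ B, ∀ t ∈ B, s - t ≤ 2 * R / L := by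
        intro s hs t ht
        have h1 : ‖(y + s • v) - (y + t • v)‖ = |s - t| * L := by
          have : (y + s • v) - (y + t • v) = (s - t) • v := by module
          rw [this, norm_smul, Real.norm_eq_abs, hL]
        have h2 : ‖(y + s • v) - (y + t • v)‖ < 2 * R :=
          lt_of_le_of_lt (norm_sub_le _ _) (by linarith [hs.2, ht.2])
        rw [le_div_iff₀ hL0]
        nlinarith [le_abs_self (s - t)]
      have hba : b - a ≤ 2 * R / L := by
        rw [sub_le_iff_le_add]
        apply csSup_le hne
        intro s hs
        rw [← sub_le_iff_le_add']
        exact le_csInf hne fun t ht => by linarith [hdist s hs t ht]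
      refine ⟨a, b, ha0, hab, hb1, ?_, ?_, ?_⟩
      · have : 2 * R / L ≤ 2/3 := by
          rw [div_le_div_iff₀ hL0 (by norm_num)]; linarith
        linarith
      · intro t ht
        by_contra hcon
        push_neg at hcon
        have htB : t ∈ B := ⟨⟨ht.1.le, by linarith [ht.2, hab, hb1]⟩, hcon⟩
        exact absurd (csInf_le hBddb htB) (not_le.2 ht.2)
      · intro t ht
        by_contra hcon
        push_neg at hcon
        have htB : t ∈ B := ⟨⟨by linarith [ht.1, hab, ha0], ht.2.le⟩, hcon⟩
        exact absurd (le_csSup hBdd htB) (not_le.2 ht.1)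
    · refine ⟨1, 1, by norm_num, le_refl 1, le_refl 1, by norm_num, ?_, ?_⟩
      · intro t ht
        by_contra hcon
        push_neg at hcon
        exact hne ⟨t, ⟨ht.1.le, ht.2.le⟩, hcon⟩
      · intro t ht; exact absurd ht.2 (not_lt.2 ht.1.le)

lemma aux_grad_mono (n : ℕ)
    (W : EuclideanSpace ℝ (Fin n) → ℝ) (K R : ℝ) (hK : 0 < K) (hR : 0 ≤ R)
    (hW : ContDiff ℝ 2 W) (hWconv : ConvexOn ℝ Set.univ W)
    (hhess : ∀ x, R ≤ ‖x‖ → ∀ v : EuclideanSpace ℝ (Fin n),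
      K * ‖v‖ ^ 2 ≤ iteratedFDeriv ℝ 2 W x ![v, v])
    (x y : EuclideanSpace ℝ (Fin n)) (hx : 2 * R ≤ ‖x‖) :
    K / 3 * ‖x - y‖ ^ 2 ≤ ⟪gradient W x - gradient W y, x - y⟫ := by
  by_cases hv : x = y
  · simp [hv]
  set v := x - y with hvdef
  set z : ℝ → EuclideanSpace ℝ (Fin n) := fun t => y + t • v with hz
  have hWd : Differentiable ℝ W := hW.differentiable two_ne_zero
  have hW1 : ContDiff ℝ 1 (fderiv ℝ W) := hW.fderiv_right (le_refl _)
  have hWd2 : Differentiable ℝ (fderiv ℝ W) := hW1.differentiable one_ne_zero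
  have hzd : ∀ t : ℝ, HasDerivAt z v t := by
    intro t
    have : HasDerivAt (fun s : ℝ => s • v) ((1:ℝ) • v) t :=
      (hasDerivAt_id t).smul_const v
    simpa [hz] using this.const_add y
  set g : ℝ → ℝ := fun t => fderiv ℝ W (z t) v with hg
  set Q : ℝ → ℝ := fun t => fderiv ℝ (fderiv ℝ W) (z t) v v with hQ
  have hgd : ∀ t : ℝ, HasDerivAt g (Q t) t := by
    intro t
    have h1 : HasFDerivAt (fderiv ℝ W) (fderiv ℝ (fderiv ℝ W) (z t)) (z t) :=
      (hWd2 (z t)).hasFDerivAt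
    have h2 : HasDerivAt (fun s => fderiv ℝ W (z s)) (fderiv ℝ (fderiv ℝ W) (z t) v) t :=
      h1.comp_hasDerivAt t (hzd t)
    have h3 := h2.clm_apply (hasDerivAt_const t v)
    simpa [hg, hQ] using h3
  have hgc : Continuous g := by
    exact continuous_iff_continuousAt.2 fun t => (hgd t).differentiableAt.continuousAt
  -- Q t ≥ K ‖v‖² when ‖z t‖ ≥ R
  have hQge : ∀ t : ℝ, R ≤ ‖z t‖ → K * ‖v‖ ^ 2 ≤ Q t := by
    intro t ht
    have := hhess (z t) ht v
    rwa [iteratedFDeriv_two_apply] at this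
  -- φ convex, deriv φ = g, g monotone
  have hφd : ∀ t : ℝ, HasDerivAt (fun s => W (z s)) (g t) t := fun t =>
    ((hWd (z t)).hasFDerivAt).comp_hasDerivAt t (hzd t)
  have hφconv : ConvexOn ℝ Set.univ (fun s => W (z s)) := by
    have hA : ConvexOn ℝ ((AffineMap.lineMap y x : ℝ →ᵃ[ℝ] EuclideanSpace ℝ (Fin n)) ⁻¹' Set.univ)
        (W ∘ (AffineMap.lineMap y x : ℝ →ᵃ[ℝ] EuclideanSpace ℝ (Fin n))) :=
      hWconv.comp_affineMap _
    have heq : (fun s : ℝ => W (z s)) =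
        (W ∘ (AffineMap.lineMap y x : ℝ →ᵃ[ℝ] EuclideanSpace ℝ (Fin n))) := by
      funext t
      simp only [Function.comp_apply, AffineMap.lineMap_apply, hz, hvdef]
      congr 1
      simp only [vsub_eq_sub, vadd_eq_add]
      abel
    rw [heq]
    rwa [Set.preimage_univ] at hA
  have hmono : MonotoneOn (deriv fun s => W (z s)) Set.univ :=
    hφconv.monotoneOn_deriv (fun t _ => (hφd t).differentiableAt)
  have hderiv_eq : ∀ t : ℝ, deriv (fun s => W (z s)) t = g t := fun t => (hφd t).deriv
  obtain ⟨a, b, ha0, hab, hb1, hba, hgood1, hgood2⟩ :=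
    select_interval R hR x y hx hv
  set C := K * ‖v‖ ^ 2 with hC
  have key : ∀ p q : ℝ, p ≤ q → (∀ t ∈ Set.Ioo p q, R ≤ ‖y + t • (x - y)‖) →
      C * (q - p) ≤ g q - g p := by
    intro p q hpq hgoodpq
    refine (convex_Icc p q).mul_sub_le_image_sub_of_le_deriv
      (hgc.continuousOn) (fun t _ => ((hgd t).differentiableAt).differentiableWithinAt)
      ?_ p (Set.left_mem_Icc.2 hpq) q (Set.right_mem_Icc.2 hpq) hpq
    intro t htmem
    rw [interior_Icc] at htmem
    rw [(hgd t).deriv]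
    exact hQge t (hgoodpq t htmem)
  have k1 : C * (a - 0) ≤ g a - g 0 := key 0 a ha0 hgood1
  have k2 : C * (1 - b) ≤ g 1 - g b := key b 1 hb1 hgood2
  have k3 : g a ≤ g b := by
    have h := hmono (Set.mem_univ a) (Set.mem_univ b) hab
    rwa [hderiv_eq, hderiv_eq] at h
  have hinner : ⟪gradient W x - gradient W y, x - y⟫ = g 1 - g 0 := by
    have e1 : z 1 = x := by simp [hz, hvdef]
    have e0 : z 0 = y := by simp [hz]
    have q1 : ⟪gradient W x, v⟫ = fderiv ℝ W x v :=
      InnerProductSpace.toDual_symm_apply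
    have q0 : ⟪gradient W y, v⟫ = fderiv ℝ W y v :=
      InnerProductSpace.toDual_symm_apply
    rw [← hvdef, inner_sub_left, q1, q0, hg]
    simp only [e1, e0]
  rw [hinner]
  have hC0 : 0 ≤ C := mul_nonneg hK.le (sq_nonneg _)
  have hprod : 0 ≤ C * (2/3 - (b - a)) := mul_nonneg hC0 (by linarith)
  have hnorm : ‖x - y‖ = ‖v‖ := by rw [hvdef]
  rw [hnorm]
  nlinarith [k1, k2, k3]

/-- If `W` is `C²`, convex, with `∇²W(x) ≥ K·Id` for `|x| ≥ R` (`K > 0`), then for all `x, y`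
with `|x| ≥ 2R` or `|y| ≥ 2R`, `(∇W(x) - ∇W(y)) · (x - y) ≥ (K/3) |x - y|²`. -/
theorem grad_monotonicity_outside_ball (n : ℕ)
    (W : EuclideanSpace ℝ (Fin n) → ℝ) (K R : ℝ) (hK : 0 < K) (hR : 0 ≤ R)
    (hW : ContDiff ℝ 2 W) (hWconv : ConvexOn ℝ Set.univ W)
    (hhess : ∀ x, R ≤ ‖x‖ → ∀ v : EuclideanSpace ℝ (Fin n),
      K * ‖v‖ ^ 2 ≤ iteratedFDeriv ℝ 2 W x ![v, v])
    (x y : EuclideanSpace ℝ (Fin n)) (hxy : 2 * R ≤ ‖x‖ ∨ 2 * R ≤ ‖y‖) :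
    K / 3 * ‖x - y‖ ^ 2 ≤ ⟪gradient W x - gradient W y, x - y⟫ := by
  rcases hxy with hx | hy
  · exact aux_grad_mono n W K R hK hR hW hWconv hhess x y hx
  · have h := aux_grad_mono n W K R hK hR hW hWconv hhess y x hy
    have e1 : ‖y - x‖ = ‖x - y‖ := norm_sub_rev y x
    have e2 : ⟪gradient W y - gradient W x, y - x⟫ = ⟪gradient W x - gradient W y, x - y⟫ := by
      rw [← neg_sub (gradient W x) (gradient W y), ← neg_sub x y, inner_neg_neg]
    rw [e1, e2] at h
    exact h
end

section
/- Let f : [0, ∞) → [0, ∞) be absolutely continuous and satisfy f'(t) ≤ -C ε^p (2 f(t) - ε²) for almost every t > 0, for all ε > 0, where C, p > 0. Then f(t) ≤ (f(0)^{-p/2} + c t)^{-2/p} for an explicit constant c > 0 depending only on C and p. -/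
open MeasureTheory intervalIntegral
open Filter

/-- Convexity inequality for `x ↦ x^(-β)`: tangent line at `b` lies below. -/
lemma rpow_neg_convexity {β a b : ℝ} (hβ : 0 < β) (ha : 0 < a) (hab : a ≤ b) :
    β * b ^ (-(β + 1)) * (b - a) ≤ a ^ (-β) - b ^ (-β) := by
  have hb : 0 < b := lt_of_lt_of_le ha hab
  set A := a ^ β with hA
  set B := b ^ β with hB
  have hApos : 0 < A := Real.rpow_pos_of_pos ha β
  have hBpos : 0 < B := Real.rpow_pos_of_pos hb β
  have hber := one_add_mul_self_le_rpow_one_add (s := b / a - 1)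
      (by have h : 0 ≤ b / a := by positivity
          linarith) (p := β + 1) (by linarith)
  have hda : (1 : ℝ) + (b / a - 1) = b / a := by ring
  rw [hda] at hber
  have hdiv : (b / a) ^ (β + 1) = (B * b) / (A * a) := by
    rw [Real.div_rpow hb.le ha.le, Real.rpow_add_one hb.ne' β, Real.rpow_add_one ha.ne' β]
  rw [hdiv, le_div_iff₀ (by positivity)] at hber
  have e2 : (1 + (β + 1) * (b / a - 1)) * (A * a) = A * b + β * A * (b - a) := by
    field_simp
    ring
  rw [e2] at hber
  have hbneg : b ^ (-(β + 1)) = (B * b)⁻¹ := by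
    rw [Real.rpow_neg hb.le, Real.rpow_add_one hb.ne' β]
  have haneg : a ^ (-β) = A⁻¹ := by rw [Real.rpow_neg ha.le]
  have hbneg' : b ^ (-β) = B⁻¹ := by rw [Real.rpow_neg hb.le]
  rw [hbneg, haneg, hbneg']
  rw [show β * (B * b)⁻¹ * (b - a) = (β * A * (b - a)) / (A * (B * b)) by
    field_simp]
  rw [show A⁻¹ - B⁻¹ = (B * b - A * b) / (A * (B * b)) by field_simp]
  apply div_le_div_of_nonneg_right ?_ (by positivity)
  · linarith

/-- If `f : [0,∞) → [0,∞)` is absolutely continuous (encoded by the fundamental theorem of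
calculus representation with an a.e. derivative `f'`) and satisfies
`f'(t) ≤ -C ε^p (2 f(t) - ε²)` for a.e. `t > 0` and every `ε > 0`, with `C, p > 0`, then
`f(t) ≤ (f(0)^{-p/2} + c t)^{-2/p}` for some constant `c > 0` depending only on `C` and `p`. -/
theorem polynomial_decay_of_family_differential_ineq
    (f f' : ℝ → ℝ) (C p : ℝ) (hC : 0 < C) (hp : 0 < p)
    (hnonneg : ∀ t, 0 ≤ t → 0 ≤ f t)
    (hcont : ContinuousOn f (Set.Ici 0))
    (hint : ∀ t, 0 < t → IntervalIntegrable f' volume 0 t)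
    (hftc : ∀ t, 0 ≤ t → f t = f 0 + ∫ u in (0:ℝ)..t, f' u)
    (hineq : ∀ ε : ℝ, 0 < ε →
      ∀ᵐ t ∂(volume.restrict (Set.Ioi (0:ℝ))),
        f' t ≤ -C * ε ^ p * (2 * f t - ε ^ 2)) :
    ∃ c : ℝ, 0 < c ∧ ∀ t, 0 ≤ t →
      f t ≤ (f 0 ^ (-(p / 2)) + c * t) ^ (-(2 / p)) := by
  set β := p / 2 with hβdef
  have hβ : 0 < β := by positivity
  refine ⟨β * C, by positivity, ?_⟩
  -- integrability on subintervals
  have hint' : ∀ s t : ℝ, 0 ≤ s → 0 ≤ t → IntervalIntegrable f' volume s t := by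
    have h0 : ∀ t : ℝ, 0 ≤ t → IntervalIntegrable f' volume 0 t := by
      intro t ht
      rcases ht.eq_or_lt with h | h
      · subst h; exact IntervalIntegrable.refl
      · exact hint t h
    intro s t hs ht
    exact (h0 s hs).symm.trans (h0 t ht)
  -- FTC on subintervals
  have hdiff : ∀ s t : ℝ, 0 ≤ s → s ≤ t → f t - f s = ∫ u in s..t, f' u := by
    intro s t hs hst
    have h := integral_interval_sub_left (hint' 0 t le_rfl (hs.trans hst)) (hint' 0 s le_rfl hs)
    rw [hftc t (hs.trans hst), hftc s hs]
    linarith [h]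
  -- transfer a.e. statements to Icc
  have hae : ∀ ε : ℝ, 0 < ε → ∀ s t : ℝ, 0 ≤ s →
      ∀ᵐ u ∂(volume.restrict (Set.Icc s t)),
        f' u ≤ -C * ε ^ p * (2 * f u - ε ^ 2) := by
    intro ε hε s t hs
    rw [← ae_restrict_congr_set Ioc_ae_eq_Icc]
    exact ae_restrict_of_ae_restrict_of_subset
      (fun x hx => lt_of_le_of_lt hs hx.1) (hineq ε hε)
  -- monotonicity
  have hmono : ∀ s t : ℝ, 0 ≤ s → s ≤ t → f t ≤ f s := by
    intro s t hs hst
    have hfc : ContinuousOn f (Set.uIcc s t) := by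
      apply hcont.mono
      rw [Set.uIcc_of_le hst]
      exact fun x hx => hs.trans hx.1
    have key : ∀ ε : ℝ, 0 < ε → f t - f s ≤ C * ε ^ p * ε ^ 2 * (t - s) := by
      intro ε hε
      have hg : IntervalIntegrable (fun u => -C * ε ^ p * (2 * f u - ε ^ 2)) volume s t :=
        (continuousOn_const.mul ((continuousOn_const.mul hfc).sub
          continuousOn_const)).intervalIntegrable
      have h1 : (∫ u in s..t, f' u) ≤ ∫ u in s..t, -C * ε ^ p * (2 * f u - ε ^ 2) :=
        integral_mono_ae_restrict hst (hint' s t hs (hs.trans hst)) hg (hae ε hε s t hs)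
      have h3 : (∫ u in s..t, -C * ε ^ p * (2 * f u - ε ^ 2)) ≤
          ∫ _u in s..t, C * ε ^ p * ε ^ 2 := by
        apply integral_mono_on hst hg intervalIntegrable_const
        intro x hx
        have hfx : 0 ≤ f x := hnonneg x (hs.trans hx.1)
        have hεp : 0 ≤ ε ^ p := Real.rpow_nonneg hε.le p
        nlinarith [mul_nonneg (mul_nonneg hC.le hεp) hfx]
      rw [intervalIntegral.integral_const, smul_eq_mul] at h3
      have hd := hdiff s t hs hst
      nlinarith
    have hseq : Tendsto
        ((fun x : ℝ => C * x ^ p * x ^ 2 * (t - s)) ∘ (fun n : ℕ => ((n:ℝ)+1)⁻¹))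
        atTop (nhds 0) := by
      have h1 : Tendsto (fun n : ℕ => ((n:ℝ)+1)⁻¹) atTop (nhds 0) :=
        tendsto_inv_atTop_zero.comp (tendsto_atTop_add_const_right _ 1 tendsto_natCast_atTop_atTop)
      have h2 : ContinuousAt (fun x : ℝ => C * x ^ p * x ^ 2 * (t - s)) 0 := by
        have hrp := Real.continuousAt_rpow_const 0 p (Or.inr hp.le)
        exact ((continuousAt_const.mul hrp).mul (continuousAt_pow 0 2)).mul continuousAt_const
      have h3 := (h2.tendsto).comp h1
      have hv : C * (0:ℝ) ^ p * (0:ℝ) ^ 2 * (t - s) = 0 := by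
        simp [Real.zero_rpow hp.ne']
      rwa [hv] at h3
    have h4 : f t - f s ≤ 0 :=
      ge_of_tendsto' hseq (fun n => key _ (by positivity))
    linarith
  -- key differential step with optimized ε
  have hkey : ∀ s t : ℝ, 0 ≤ s → s ≤ t → 0 < f t →
      f t ≤ f s - C * (t - s) * f t ^ (β + 1) := by
    intro s t hs hst hft
    have hε : 0 < Real.sqrt (f t) := Real.sqrt_pos.mpr hft
    have hε2 : (Real.sqrt (f t)) ^ 2 = f t := Real.sq_sqrt hft.le
    have hεp : (Real.sqrt (f t)) ^ p = f t ^ β := by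
      rw [Real.sqrt_eq_rpow, ← Real.rpow_mul hft.le]
      congr 1
      rw [hβdef]; ring
    have hg : IntervalIntegrable (fun _u : ℝ => -(C * f t ^ (β+1))) volume s t :=
      intervalIntegrable_const
    have h1 : (∫ u in s..t, f' u) ≤ ∫ _u in s..t, -(C * f t ^ (β+1)) := by
      apply integral_mono_ae_restrict hst (hint' s t hs (hs.trans hst)) hg
      have h2 := hae (Real.sqrt (f t)) hε s t hs
      filter_upwards [h2, ae_restrict_mem measurableSet_Icc] with u hu hu'
      have hfu : f t ≤ f u := hmono u t (hs.trans hu'.1) hu'.2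
      have hβ1 : f t ^ (β + 1) = f t ^ β * f t := Real.rpow_add_one hft.ne' β
      have hεpnn : 0 ≤ f t ^ β := Real.rpow_nonneg hft.le β
      rw [hεp, hε2] at hu
      nlinarith [mul_nonneg (mul_nonneg hC.le hεpnn) (sub_nonneg.mpr hfu)]
    rw [intervalIntegral.integral_const, smul_eq_mul] at h1
    have hd := hdiff s t hs hst
    nlinarith
  -- convexity step : increment of g = f^(-β)
  have hstepE : ∀ s t : ℝ, 0 ≤ s → s ≤ t → 0 < f t →
      β * C * (t - s) * (f t / f s) ^ (β + 1) ≤ f t ^ (-β) - f s ^ (-β) := by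
    intro s t hs hst hft
    have hle : f t ≤ f s := hmono s t hs hst
    have hfs : 0 < f s := lt_of_lt_of_le hft hle
    have h1 := rpow_neg_convexity hβ hft hle
    have h2 := hkey s t hs hst hft
    have hq : (f t / f s) ^ (β + 1) = f t ^ (β+1) * f s ^ (-(β+1)) := by
      rw [Real.div_rpow hft.le hfs.le, Real.rpow_neg hfs.le, div_eq_mul_inv]
    have hpos : 0 ≤ β * f s ^ (-(β+1)) := by positivity
    have h3 : β * f s ^ (-(β+1)) * (C * (t - s) * f t ^ (β+1)) ≤
        β * f s ^ (-(β+1)) * (f s - f t) :=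
      mul_le_mul_of_nonneg_left (by linarith) hpos
    calc β * C * (t - s) * (f t / f s) ^ (β + 1)
        = β * f s ^ (-(β+1)) * (C * (t - s) * f t ^ (β+1)) := by rw [hq]; ring
      _ ≤ β * f s ^ (-(β+1)) * (f s - f t) := h3
      _ ≤ f t ^ (-β) - f s ^ (-β) := h1
  -- main argument
  intro t ht
  rcases ht.eq_or_lt with h0 | htpos
  · rw [← h0]
    rw [mul_zero, add_zero, ← Real.rpow_mul (hnonneg 0 le_rfl)]
    have he : -(p/2) * -(2/p) = 1 := by field_simp
    rw [he, Real.rpow_one]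
  · by_cases hft : f t ≤ 0
    · have hb0 : (0:ℝ) ≤ f 0 ^ (-β) := Real.rpow_nonneg (hnonneg 0 le_rfl) _
      exact le_trans hft (Real.rpow_nonneg
        (add_nonneg hb0 (by positivity)) _)
    · push_neg at hft
      have claim : ∀ ε : ℝ, 0 < ε → ε < 1 →
          f 0 ^ (-β) + β * C * t * (1 - ε) ^ (β + 1) ≤ f t ^ (-β) := by
        intro ε hε hε1
        have hUC := isCompact_Icc.uniformContinuousOn_of_continuous
          (hcont.mono (Set.Icc_subset_Ici_self : Set.Icc (0:ℝ) t ⊆ Set.Ici 0))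
        rw [Metric.uniformContinuousOn_iff] at hUC
        obtain ⟨δ, hδ, hδ'⟩ := hUC (ε * f t) (by positivity)
        obtain ⟨n, hn⟩ := exists_nat_gt (t / δ)
        have hnpos : (0:ℝ) < n := lt_trans (by positivity) hn
        have hmesh : t / n < δ := by
          rw [div_lt_iff₀ hnpos]
          rw [div_lt_iff₀ hδ] at hn
          linarith [hn]
        have hmesh' : 0 < t / n := by positivity
        have hind : ∀ i : ℕ, i ≤ n →
            f 0 ^ (-β) + β * C * ((i:ℝ) * t / n) * (1 - ε) ^ (β + 1) ≤
              f ((i:ℝ) * t / n) ^ (-β) := by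
          intro i
          induction i with
          | zero => intro _; simp
          | succ i ih =>
            intro hi
            have hi' : i ≤ n := Nat.le_of_succ_le hi
            have h1 := ih hi'
            set s1 := (i:ℝ) * t / n with hs1def
            set s2 := ((i+1:ℕ):ℝ) * t / n with hs2def
            have hs1nn : 0 ≤ s1 := by positivity
            have hd12 : s2 - s1 = t / n := by
              rw [hs1def, hs2def]; push_cast; ring
            have hs12 : s1 ≤ s2 := by linarith
            have hs2t : s2 ≤ t := by
              rw [hs2def]
              rw [div_le_iff₀ hnpos]
              have : ((i+1:ℕ):ℝ) ≤ (n:ℝ) := by exact_mod_cast hi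
              nlinarith
            have hs1t : s1 ≤ t := le_trans hs12 hs2t
            have hf2 : 0 < f s2 := lt_of_lt_of_le hft (hmono s2 t (hs1nn.trans hs12) hs2t)
            have hf1m : f t ≤ f s1 := hmono s1 t hs1nn hs1t
            have hf1 : 0 < f s1 := lt_of_lt_of_le hft hf1m
            have hf2m : f t ≤ f s2 := hmono s2 t (hs1nn.trans hs12) hs2t
            -- ratio bound
            have hdist : dist (f s1) (f s2) < ε * f t := by
              apply hδ' s1 ⟨hs1nn, hs1t⟩ s2 ⟨hs1nn.trans hs12, hs2t⟩
              rw [Real.dist_eq, abs_of_nonpos (by linarith)]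
              rw [show -(s1 - s2) = t / n by linarith]
              exact hmesh
            have hclose : f s1 - f s2 < ε * f t :=
              (abs_lt.mp (by rwa [Real.dist_eq] at hdist)).2
            have hratio : 1 - ε ≤ f s2 / f s1 := by
              rw [le_div_iff₀ hf1]
              nlinarith
            have hr : (1 - ε) ^ (β + 1) ≤ (f s2 / f s1) ^ (β + 1) :=
              Real.rpow_le_rpow (by linarith) hratio (by positivity)
            have hE := hstepE s1 s2 hs1nn hs12 hf2
            have hmul : β * C * (s2 - s1) * (1 - ε) ^ (β + 1) ≤
                β * C * (s2 - s1) * (f s2 / f s1) ^ (β + 1) :=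
              mul_le_mul_of_nonneg_left hr
                (mul_nonneg (mul_nonneg hβ.le hC.le) (by linarith))
            have hgoal : f 0 ^ (-β) + β * C * s2 * (1 - ε) ^ (β + 1) ≤ f s2 ^ (-β) := by
              have hA : β * C * s2 * (1 - ε) ^ (β + 1)
                  = β * C * s1 * (1 - ε) ^ (β + 1)
                    + β * C * (s2 - s1) * (1 - ε) ^ (β + 1) := by ring
              linarith [hmul, hE, h1]
            exact hgoal
        have hfin := hind n le_rfl
        rw [show (n:ℝ) * t / n = t by field_simp] at hfin
        exact hfin
      -- let ε → 0
      have h1 : Tendsto (fun k : ℕ => ((k:ℝ)+2)⁻¹) atTop (nhds 0) :=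
        tendsto_inv_atTop_zero.comp (tendsto_atTop_add_const_right _ 2 tendsto_natCast_atTop_atTop)
      have h2 : ContinuousAt (fun x : ℝ => f 0 ^ (-β) + β * C * t * (1 - x) ^ (β + 1)) 0 := by
        have hrp : ContinuousAt (fun y : ℝ => y ^ (β + 1)) ((1:ℝ) - 0) :=
          Real.continuousAt_rpow_const (1-0) (β+1) (Or.inl (by norm_num))
        have hsub : ContinuousAt (fun x : ℝ => 1 - x) 0 := by fun_prop
        have hc : ContinuousAt (fun x : ℝ => (1 - x) ^ (β + 1)) 0 := hrp.comp hsub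
        exact continuousAt_const.add (continuousAt_const.mul hc)
      have h3 := (h2.tendsto).comp h1
      have hval : f 0 ^ (-β) + β * C * t * (1 - 0) ^ (β + 1) = f 0 ^ (-β) + β * C * t := by
        norm_num [Real.one_rpow]
      rw [hval] at h3
      have hterms : ∀ k : ℕ,
          (fun x : ℝ => f 0 ^ (-β) + β * C * t * (1 - x) ^ (β + 1)) (((k:ℝ)+2)⁻¹)
            ≤ f t ^ (-β) := by
        intro k
        apply claim
        · positivity
        · rw [inv_lt_one_iff₀]
          right; linarith [Nat.cast_nonneg (α := ℝ) k]
      have hg : f 0 ^ (-β) + β * C * t ≤ f t ^ (-β) :=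
        le_of_tendsto h3 (Filter.Eventually.of_forall hterms)
      -- conclude
      have hbase : 0 < f 0 ^ (-β) + β * C * t := by
        have h6 : (0:ℝ) ≤ f 0 ^ (-β) := Real.rpow_nonneg (hnonneg 0 le_rfl) _
        have h7 : 0 < β * C * t := by positivity
        linarith
      have h5 := Real.rpow_le_rpow_of_nonpos hbase hg (by
        have : 0 < 2 / p := by positivity
        linarith : -(2/p) ≤ 0)
      rw [← Real.rpow_mul hft.le] at h5
      have he : -β * -(2/p) = 1 := by rw [hβdef]; field_simp
      rw [he, Real.rpow_one] at h5
      exact h5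
end
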